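/- Suppose discrete random variables satisfy: for each node X_k in layer j+1 or beyond of a DAG G (with layer decomposition L_1,...,L_r and ancestral sets A_j), H(X_k | pa(k)) = h* is constant across all nodes k, and for each X_k not in A_{j+1} there exists an ancestor X_i of X_k in L_{j+1} with I(X_k; X_i | A_j) > 0. Then H(X_i | A_j) < H(X_k | A_j) for that ancestor X_i. -/

import Mathlib

open scoped Classical BigOperators
open Finset

noncomputable section

/-- Probability of an event under a mass function on a finite sample space. -/
def prE {Ω : Type*} [Fintype Ω] (p : Ω → ℝ) (s : Set Ω) : ℝ :=
  ∑ ω, if ω ∈ s then p ω else 0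

/-- Conditional probability P(s | t). -/
def condPr {Ω : Type*} [Fintype Ω] (p : Ω → ℝ) (s t : Set Ω) : ℝ :=
  prE p (s ∩ t) / prE p t

/-- Independence of two random variables. -/
def IndepRV {Ω α β : Type*} [Fintype Ω] (p : Ω → ℝ) (X : Ω → α) (Y : Ω → β) : Prop :=
  ∀ a b, prE p {ω | X ω = a ∧ Y ω = b} = prE p {ω | X ω = a} * prE p {ω | Y ω = b}

/-- Conditional independence of X and Y given Z (cross-multiplied form). -/
def CondIndepRV {Ω α β γ : Type*} [Fintype Ω] (p : Ω → ℝ)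
    (X : Ω → α) (Y : Ω → β) (Z : Ω → γ) : Prop :=
  ∀ a b c,
    prE p {ω | X ω = a ∧ Y ω = b ∧ Z ω = c} * prE p {ω | Z ω = c} =
      prE p {ω | X ω = a ∧ Z ω = c} * prE p {ω | Y ω = b ∧ Z ω = c}

/-- Shannon entropy of a finitely-supported random variable. -/
def entH {Ω α : Type*} [Fintype Ω] [Fintype α] (p : Ω → ℝ) (X : Ω → α) : ℝ :=
  -∑ a : α, prE p {ω | X ω = a} * Real.log (prE p {ω | X ω = a})

/-- Conditional entropy H(X | Y). -/
def condEnt {Ω α β : Type*} [Fintype Ω] [Fintype α] [Fintype β]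
    (p : Ω → ℝ) (X : Ω → α) (Y : Ω → β) : ℝ :=
  entH p (fun ω => (X ω, Y ω)) - entH p Y

/-- Mutual information I(X;Y). -/
def mutInfo {Ω α β : Type*} [Fintype Ω] [Fintype α] [Fintype β]
    (p : Ω → ℝ) (X : Ω → α) (Y : Ω → β) : ℝ :=
  entH p X + entH p Y - entH p (fun ω => (X ω, Y ω))

/-- Conditional mutual information I(X;Y | Z). -/
def condMI {Ω α β γ : Type*} [Fintype Ω] [Fintype α] [Fintype β] [Fintype γ]
    (p : Ω → ℝ) (X : Ω → α) (Y : Ω → β) (Z : Ω → γ) : ℝ :=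
  entH p (fun ω => (X ω, Z ω)) + entH p (fun ω => (Y ω, Z ω)) -
    entH p (fun ω => (X ω, Y ω, Z ω)) - entH p Z

/-- The parent set of `k` in the directed graph `E`. -/
def paF {d : ℕ} (E : Fin d → Fin d → Prop) (k : Fin d) : Finset (Fin d) :=
  Finset.univ.filter (fun i => E i k)

/-- The restriction of a configuration to a subset of coordinates, as a random variable. -/
def restr {d : ℕ} {β : Type*} (s : Finset (Fin d)) : (Fin d → β) → (↥s → β) :=
  fun x i => x i.1

/-- `P` factorizes over the DAG with edge relation `E`:
there are nonnegative Markov kernels, each depending only on the parent coordinates,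
whose product is `p`. -/
def Factorizes {d : ℕ} {β : Type*} [Fintype β] (E : Fin d → Fin d → Prop)
    (p : (Fin d → β) → ℝ) : Prop :=
  ∃ f : Fin d → β → (Fin d → β) → ℝ,
    (∀ k b x, 0 ≤ f k b x) ∧ (∀ k x, ∑ b, f k b x = 1) ∧
    (∀ k b x y, (∀ j, E j k → x j = y j) → f k b x = f k b y) ∧
    (∀ x, p x = ∏ k, f k (x k) x)

/-- Ancestral sets of the layer decomposition: `Aset E j` is the union of the first `j`
layers, i.e. `Aset E (j+1)` consists of all nodes whose parents all lie in `Aset E j`. -/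
def Aset {d : ℕ} (E : Fin d → Fin d → Prop) : ℕ → Finset (Fin d)
  | 0 => ∅
  | (j+1) => Finset.univ.filter (fun k => ∀ i, E i k → i ∈ Aset E j)

set_option linter.unusedSectionVars false
set_option maxHeartbeats 1000000

section Generic
variable {Ω : Type*} [Fintype Ω] {α β γ : Type*} [Fintype α] [Fintype β] [Fintype γ]
variable {p : Ω → ℝ}

lemma prE_nonneg (hp : ∀ ω, 0 ≤ p ω) (s : Set Ω) : 0 ≤ prE p s := by
  refine Finset.sum_nonneg fun ω _ => ?_
  split_ifs
  · exact hp ω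
  · exact le_rfl

lemma prE_mono (hp : ∀ ω, 0 ≤ p ω) {s t : Set Ω} (h : s ⊆ t) : prE p s ≤ prE p t := by
  refine Finset.sum_le_sum fun ω _ => ?_
  by_cases hs : ω ∈ s
  · simp [hs, h hs]
  · simp only [hs, if_false]
    split_ifs
    · exact hp ω
    · exact le_rfl

lemma prE_pos (hp : ∀ ω, 0 < p ω) {s : Set Ω} {ω₀ : Ω} (h : ω₀ ∈ s) : 0 < prE p s := by
  have h1 : p ω₀ ≤ prE p s := by
    have := Finset.single_le_sum (f := fun ω => if ω ∈ s then p ω else 0)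
      (fun ω _ => by split_ifs; exacts [(hp ω).le, le_rfl]) (Finset.mem_univ ω₀)
    simpa [h, prE] using this
  linarith [hp ω₀]

lemma entH_eq (X : Ω → α) :
    entH p X = -∑ ω, p ω * Real.log (prE p {ω' | X ω' = X ω}) := by
  unfold entH
  congr 1
  calc ∑ a : α, prE p {ω | X ω = a} * Real.log (prE p {ω | X ω = a})
      = ∑ a : α, ∑ ω, (if X ω = a then p ω * Real.log (prE p {ω' | X ω' = a}) else 0) := by
        refine Finset.sum_congr rfl fun a _ => ?_
        rw [prE, Finset.sum_mul]
        refine Finset.sum_congr rfl fun ω _ => ?_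
        by_cases h : X ω = a <;> simp [h]
    _ = ∑ ω, ∑ a : α, (if X ω = a then p ω * Real.log (prE p {ω' | X ω' = a}) else 0) :=
        Finset.sum_comm
    _ = ∑ ω, p ω * Real.log (prE p {ω' | X ω' = X ω}) := by
        refine Finset.sum_congr rfl fun ω _ => ?_
        simp

lemma entH_congr {X : Ω → α} {Y : Ω → β} (h : ∀ ω ω', X ω = X ω' ↔ Y ω = Y ω') :
    entH p X = entH p Y := by
  rw [entH_eq, entH_eq]
  congr 1
  refine Finset.sum_congr rfl fun ω _ => ?_
  congr 3
  ext ω'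
  simpa using h ω' ω

lemma entH_pair_eq (X : Ω → α) (Z : Ω → γ) :
    entH p (fun ω => (X ω, Z ω)) =
      -∑ ω, p ω * Real.log (prE p {ω' | X ω' = X ω ∧ Z ω' = Z ω}) := by
  rw [entH_eq]
  congr 1
  refine Finset.sum_congr rfl fun ω _ => ?_
  congr 3
  ext ω'
  simp [Prod.ext_iff]

lemma entH_triple_eq (X : Ω → α) (Y : Ω → β) (Z : Ω → γ) :
    entH p (fun ω => (X ω, Y ω, Z ω)) =
      -∑ ω, p ω * Real.log (prE p {ω' | X ω' = X ω ∧ Y ω' = Y ω ∧ Z ω' = Z ω}) := by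
  rw [entH_eq]
  congr 1
  refine Finset.sum_congr rfl fun ω _ => ?_
  congr 3
  ext ω'
  simp [Prod.ext_iff]

lemma condMI_eq_condEnt (X : Ω → α) (Y : Ω → β) (Z : Ω → γ) :
    condMI p X Y Z = condEnt p X Z - condEnt p X (fun ω => (Y ω, Z ω)) := by
  simp only [condMI, condEnt]
  ring

lemma condMI_eq_sum (hp : ∀ ω, 0 < p ω) (X : Ω → α) (Y : Ω → β) (Z : Ω → γ) :
    condMI p X Y Z = ∑ ω, p ω * Real.log
      ((prE p {ω' | X ω' = X ω ∧ Y ω' = Y ω ∧ Z ω' = Z ω} * prE p {ω' | Z ω' = Z ω}) /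
       (prE p {ω' | X ω' = X ω ∧ Z ω' = Z ω} *
        prE p {ω' | Y ω' = Y ω ∧ Z ω' = Z ω})) := by
  have key : ∀ ω : Ω, p ω * Real.log
      ((prE p {ω' | X ω' = X ω ∧ Y ω' = Y ω ∧ Z ω' = Z ω} * prE p {ω' | Z ω' = Z ω}) /
       (prE p {ω' | X ω' = X ω ∧ Z ω' = Z ω} *
        prE p {ω' | Y ω' = Y ω ∧ Z ω' = Z ω})) =
      p ω * Real.log (prE p {ω' | X ω' = X ω ∧ Y ω' = Y ω ∧ Z ω' = Z ω}) +
      p ω * Real.log (prE p {ω' | Z ω' = Z ω}) -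
      p ω * Real.log (prE p {ω' | X ω' = X ω ∧ Z ω' = Z ω}) -
      p ω * Real.log (prE p {ω' | Y ω' = Y ω ∧ Z ω' = Z ω}) := by
    intro ω
    have hA : 0 < prE p {ω' | X ω' = X ω ∧ Y ω' = Y ω ∧ Z ω' = Z ω} :=
      prE_pos hp ⟨rfl, rfl, rfl⟩
    have hB : 0 < prE p {ω' | X ω' = X ω ∧ Z ω' = Z ω} := prE_pos hp ⟨rfl, rfl⟩
    have hC : 0 < prE p {ω' | Y ω' = Y ω ∧ Z ω' = Z ω} := prE_pos hp ⟨rfl, rfl⟩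
    have hD : 0 < prE p {ω' | Z ω' = Z ω} := prE_pos hp rfl
    rw [Real.log_div (by positivity) (by positivity), Real.log_mul hA.ne' hD.ne',
      Real.log_mul hB.ne' hC.ne']
    ring
  rw [Finset.sum_congr rfl fun ω _ => key ω]
  rw [Finset.sum_sub_distrib, Finset.sum_sub_distrib, Finset.sum_add_distrib]
  rw [condMI, entH_pair_eq X Z, entH_pair_eq Y Z, entH_triple_eq X Y Z, entH_eq Z]
  ring

lemma condMI_zero_of_condIndep (hp : ∀ ω, 0 < p ω) {X : Ω → α} {Y : Ω → β} {Z : Ω → γ}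
    (h : CondIndepRV p X Y Z) : condMI p X Y Z = 0 := by
  rw [condMI_eq_sum hp]
  refine Finset.sum_eq_zero fun ω _ => ?_
  have hB : 0 < prE p {ω' | X ω' = X ω ∧ Z ω' = Z ω} := prE_pos hp ⟨rfl, rfl⟩
  have hC : 0 < prE p {ω' | Y ω' = Y ω ∧ Z ω' = Z ω} := prE_pos hp ⟨rfl, rfl⟩
  rw [h (X ω) (Y ω) (Z ω), div_self (by positivity), Real.log_one, mul_zero]

lemma prE_sum_fst (W : Ω → α) (V : Ω → γ) (c : γ) :
    ∑ a, prE p {ω | W ω = a ∧ V ω = c} = prE p {ω | V ω = c} := by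
  unfold prE
  rw [Finset.sum_comm]
  refine Finset.sum_congr rfl fun ω _ => ?_
  by_cases hV : V ω = c
  · simp [hV]
  · simp [hV]

lemma prE_sum_total (hs : ∑ ω, p ω = 1) (V : Ω → γ) :
    ∑ c, prE p {ω | V ω = c} = 1 := by
  unfold prE
  rw [Finset.sum_comm, ← hs]
  refine Finset.sum_congr rfl fun ω _ => ?_
  simp

end Generic

section Generic2
variable {Ω : Type*} [Fintype Ω] {α β γ : Type*} [Fintype α] [Fintype β] [Fintype γ]
variable {p : Ω → ℝ}

lemma condMI_nonneg (hp : ∀ ω, 0 < p ω) (hs : ∑ ω, p ω = 1)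
    (X : Ω → α) (Y : Ω → β) (Z : Ω → γ) : 0 ≤ condMI p X Y Z := by
  have hp' : ∀ ω, 0 ≤ p ω := fun ω => (hp ω).le
  -- value-level probabilities
  set A : α → β → γ → ℝ := fun a b c => prE p {ω | X ω = a ∧ Y ω = b ∧ Z ω = c} with hAdef
  set B : α → γ → ℝ := fun a c => prE p {ω | X ω = a ∧ Z ω = c} with hBdef
  set C : β → γ → ℝ := fun b c => prE p {ω | Y ω = b ∧ Z ω = c} with hCdef
  set D : γ → ℝ := fun c => prE p {ω | Z ω = c} with hDdef
  have hneg : -condMI p X Y Z =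
      ∑ ω, p ω * Real.log ((B (X ω) (Z ω) * C (Y ω) (Z ω)) / (A (X ω) (Y ω) (Z ω) * D (Z ω))) := by
    rw [condMI_eq_sum hp, ← Finset.sum_neg_distrib]
    refine Finset.sum_congr rfl fun ω _ => ?_
    rw [← mul_neg, ← Real.log_inv, inv_div]
  have hbound : ∀ ω : Ω,
      p ω * Real.log ((B (X ω) (Z ω) * C (Y ω) (Z ω)) / (A (X ω) (Y ω) (Z ω) * D (Z ω))) ≤
      p ω * ((B (X ω) (Z ω) * C (Y ω) (Z ω)) / (A (X ω) (Y ω) (Z ω) * D (Z ω)) - 1) := by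
    intro ω
    have hA : 0 < A (X ω) (Y ω) (Z ω) := prE_pos hp ⟨rfl, rfl, rfl⟩
    have hB : 0 < B (X ω) (Z ω) := prE_pos hp ⟨rfl, rfl⟩
    have hC : 0 < C (Y ω) (Z ω) := prE_pos hp ⟨rfl, rfl⟩
    have hD : 0 < D (Z ω) := prE_pos hp rfl
    exact mul_le_mul_of_nonneg_left
      (Real.log_le_sub_one_of_pos (by positivity)) (hp' ω)
  -- the expected ratio is at most 1
  have hratio : ∑ ω, p ω * ((B (X ω) (Z ω) * C (Y ω) (Z ω)) / (A (X ω) (Y ω) (Z ω) * D (Z ω))) ≤ 1 := by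
    have hfib : ∑ ω, p ω * ((B (X ω) (Z ω) * C (Y ω) (Z ω)) / (A (X ω) (Y ω) (Z ω) * D (Z ω))) =
        ∑ t : α × β × γ, ∑ ω ∈ Finset.univ.filter (fun ω => (X ω, Y ω, Z ω) = t),
          p ω * ((B (X ω) (Z ω) * C (Y ω) (Z ω)) / (A (X ω) (Y ω) (Z ω) * D (Z ω))) :=
      (Finset.sum_fiberwise Finset.univ (fun ω => (X ω, Y ω, Z ω))
        (fun ω => p ω * ((B (X ω) (Z ω) * C (Y ω) (Z ω)) / (A (X ω) (Y ω) (Z ω) * D (Z ω))))).symm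
    have hinner : ∀ t : α × β × γ,
        (∑ ω ∈ Finset.univ.filter (fun ω => (X ω, Y ω, Z ω) = t),
          p ω * ((B (X ω) (Z ω) * C (Y ω) (Z ω)) / (A (X ω) (Y ω) (Z ω) * D (Z ω)))) ≤
        B t.1 t.2.2 * C t.2.1 t.2.2 / D t.2.2 := by
      rintro ⟨a, b, c⟩
      by_cases hne : (Finset.univ.filter (fun ω => (X ω, Y ω, Z ω) = (a, b, c))).Nonempty
      · obtain ⟨ω₀, hω₀⟩ := hne
        simp only [Finset.mem_filter, Prod.mk.injEq] at hω₀
        obtain ⟨-, hXa, hYb, hZc⟩ := hω₀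
        have hA : 0 < A a b c := prE_pos hp ⟨hXa, hYb, hZc⟩
        have hD : 0 < D c := prE_pos hp hZc
        have hconst : ∀ ω ∈ Finset.univ.filter (fun ω => (X ω, Y ω, Z ω) = (a, b, c)),
            p ω * ((B (X ω) (Z ω) * C (Y ω) (Z ω)) / (A (X ω) (Y ω) (Z ω) * D (Z ω))) =
            p ω * ((B a c * C b c) / (A a b c * D c)) := by
          intro ω hω
          simp only [Finset.mem_filter, Prod.mk.injEq] at hω
          obtain ⟨-, h1, h2, h3⟩ := hω
          rw [h1, h2, h3]
        rw [Finset.sum_congr rfl hconst, ← Finset.sum_mul]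
        have hsum_fiber : ∑ ω ∈ Finset.univ.filter (fun ω => (X ω, Y ω, Z ω) = (a, b, c)), p ω
            = A a b c := by
          rw [hAdef]
          simp only [prE, Finset.sum_filter]
          refine Finset.sum_congr rfl fun ω _ => ?_
          simp [Prod.ext_iff]
        rw [hsum_fiber]
        have : A a b c * (B a c * C b c / (A a b c * D c)) = B a c * C b c / D c := by
          field_simp
        rw [this]
      · rw [Finset.not_nonempty_iff_eq_empty] at hne
        rw [hne, Finset.sum_empty]
        have h0 : (0:ℝ) ≤ D c := prE_nonneg hp' _
        have h1 : (0:ℝ) ≤ B a c := prE_nonneg hp' _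
        have h2 : (0:ℝ) ≤ C b c := prE_nonneg hp' _
        positivity
    have hsum2 : ∑ t : α × β × γ, B t.1 t.2.2 * C t.2.1 t.2.2 / D t.2.2 ≤ 1 := by
      have e1 : ∑ t : α × β × γ, B t.1 t.2.2 * C t.2.1 t.2.2 / D t.2.2 =
          ∑ c : γ, ∑ a : α, ∑ b : β, B a c * C b c / D c := by
        rw [Fintype.sum_prod_type]
        have e1a : ∀ a : α, ∑ bc : β × γ, B a bc.2 * C bc.1 bc.2 / D bc.2 =
            ∑ c : γ, ∑ b : β, B a c * C b c / D c := by
          intro a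
          rw [Fintype.sum_prod_type]
          exact Finset.sum_comm
        rw [Finset.sum_congr rfl fun a _ => e1a a]
        exact Finset.sum_comm
      have e2 : ∀ c : γ, ∑ a : α, ∑ b : β, B a c * C b c / D c ≤ D c := by
        intro c
        by_cases hD : D c = 0
        · have hB0 : ∀ a, B a c = 0 := by
            intro a
            refine le_antisymm ?_ (prE_nonneg hp' _)
            rw [← hD]
            exact prE_mono hp' (fun ω hω => hω.2)
          have h0 : ∑ a : α, ∑ b : β, B a c * C b c / D c = 0 :=
            Finset.sum_eq_zero fun a _ => Finset.sum_eq_zero fun b _ => by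
              rw [hB0 a, zero_mul, zero_div]
          rw [h0]
          exact prE_nonneg hp' _
        · have e3 : ∀ a, ∑ b : β, B a c * C b c / D c = B a c := by
            intro a
            have e4 : ∀ b : β, B a c * C b c / D c = B a c / D c * C b c := fun b => by ring
            rw [Finset.sum_congr rfl fun b _ => e4 b, ← Finset.mul_sum]
            have e5 : ∑ b : β, C b c = D c := by
              simp only [hCdef, hDdef]
              exact prE_sum_fst Y Z c
            rw [e5]
            exact div_mul_cancel₀ _ hD
          rw [Finset.sum_congr rfl fun a _ => e3 a]
          have e6 : ∑ a : α, B a c = D c := by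
            simp only [hBdef, hDdef]
            exact prE_sum_fst X Z c
          rw [e6]
      have e7 : ∑ c : γ, D c = 1 := by
        simp only [hDdef]
        exact prE_sum_total hs Z
      calc ∑ t : α × β × γ, B t.1 t.2.2 * C t.2.1 t.2.2 / D t.2.2
          = ∑ c : γ, ∑ a : α, ∑ b : β, B a c * C b c / D c := e1
        _ ≤ ∑ c : γ, D c := Finset.sum_le_sum fun c _ => e2 c
        _ = 1 := e7
    calc ∑ ω, p ω * ((B (X ω) (Z ω) * C (Y ω) (Z ω)) / (A (X ω) (Y ω) (Z ω) * D (Z ω)))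
        = _ := hfib
      _ ≤ ∑ t : α × β × γ, B t.1 t.2.2 * C t.2.1 t.2.2 / D t.2.2 :=
          Finset.sum_le_sum fun t _ => hinner t
      _ ≤ 1 := hsum2
  have : -condMI p X Y Z ≤ 0 := by
    rw [hneg]
    calc ∑ ω, p ω * Real.log ((B (X ω) (Z ω) * C (Y ω) (Z ω)) / (A (X ω) (Y ω) (Z ω) * D (Z ω)))
        ≤ ∑ ω, p ω * ((B (X ω) (Z ω) * C (Y ω) (Z ω)) / (A (X ω) (Y ω) (Z ω) * D (Z ω)) - 1) :=
          Finset.sum_le_sum fun ω _ => hbound ω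
      _ = (∑ ω, p ω * ((B (X ω) (Z ω) * C (Y ω) (Z ω)) / (A (X ω) (Y ω) (Z ω) * D (Z ω)))) -
            ∑ ω, p ω := by
          rw [Finset.sum_congr rfl (fun (ω : Ω) _ => mul_sub (p ω)
            ((B (X ω) (Z ω) * C (Y ω) (Z ω)) / (A (X ω) (Y ω) (Z ω) * D (Z ω))) 1),
            Finset.sum_sub_distrib]
          simp
      _ ≤ 0 := by rw [hs]; linarith
  linarith

end Generic2

section MargSec
variable {d : ℕ} {E : Fin d → Fin d → Prop} {f : Fin d → Bool → (Fin d → Bool) → ℝ}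

lemma exists_sink (hacyc : ∀ a, ¬ Relation.TransGen E a a)
    {T : Finset (Fin d)} (hT : T.Nonempty) : ∃ m ∈ T, ∀ q ∈ T, ¬ E m q := by
  haveI h1 : IsIrrefl (Fin d) (fun a b => Relation.TransGen E b a) := ⟨fun a h => hacyc a h⟩
  haveI h2 : IsTrans (Fin d) (fun a b => Relation.TransGen E b a) :=
    ⟨fun a b c hab hbc => Relation.TransGen.trans hbc hab⟩
  have hwf : WellFounded (fun a b : Fin d => Relation.TransGen E b a) :=
    Finite.wellFounded_of_trans_of_irrefl _
  obtain ⟨m, hmT, hmin⟩ := hwf.has_min (↑T) (Finset.coe_nonempty.mpr hT)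
  exact ⟨m, hmT, fun q hq hEq => hmin q hq (Relation.TransGen.single hEq)⟩

lemma marg (hacyc : ∀ a, ¬ Relation.TransGen E a a)
    (hf1 : ∀ k x, ∑ b, f k b x = 1)
    (hloc : ∀ k b x y, (∀ j, E j k → x j = y j) → f k b x = f k b y)
    (T : Finset (Fin d)) :
    ∀ x₀ : Fin d → Bool,
      ∑ x ∈ Finset.univ.filter (fun x : Fin d → Bool => ∀ j, j ∉ T → x j = x₀ j),
        ∏ m ∈ T, f m (x m) x = 1 := by
  induction T using Finset.strongInduction with
  | _ T ih =>
    intro x₀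
    rcases T.eq_empty_or_nonempty with rfl | hT
    · have hset : Finset.univ.filter
          (fun x : Fin d → Bool => ∀ j, j ∉ (∅ : Finset (Fin d)) → x j = x₀ j) = {x₀} := by
        ext x
        simp [funext_iff]
      rw [hset]
      simp
    · obtain ⟨m, hmT, hsink⟩ := exists_sink hacyc hT
      have hmm : ¬ E m m := fun h => hacyc m (Relation.TransGen.single h)
      have hreindex :
          ∑ x ∈ Finset.univ.filter (fun x : Fin d → Bool => ∀ j, j ∉ T → x j = x₀ j),
            ∏ m' ∈ T, f m' (x m') x =
          ∑ yb ∈ (Finset.univ.filter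
              (fun y : Fin d → Bool => ∀ j, j ∉ T.erase m → y j = x₀ j)) ×ˢ
              (Finset.univ : Finset Bool),
            f m yb.2 (Function.update yb.1 m yb.2) *
              ∏ m' ∈ T.erase m, f m' (yb.1 m') yb.1 := by
        refine Finset.sum_nbij'
          (i := fun x : Fin d → Bool => (Function.update x m (x₀ m), x m))
          (j := fun yb : (Fin d → Bool) × Bool => Function.update yb.1 m yb.2)
          ?_ ?_ ?_ ?_ ?_
        · intro x hx
          simp only [Finset.mem_filter, Finset.mem_univ, true_and] at hx ⊢
          refine Finset.mem_product.mpr ⟨?_, Finset.mem_univ _⟩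
          simp only [Finset.mem_filter, Finset.mem_univ, true_and]
          intro j hj
          by_cases hjm : j = m
          · subst hjm; simp [Function.update_self]
          · rw [Function.update_of_ne hjm]
            exact hx j (fun hjT => hj (Finset.mem_erase.mpr ⟨hjm, hjT⟩))
        · rintro ⟨y, b⟩ hyb
          rw [Finset.mem_product] at hyb
          simp only [Finset.mem_filter, Finset.mem_univ, true_and] at hyb ⊢
          intro j hj
          have hjm : j ≠ m := fun h => hj (h ▸ hmT)
          rw [Function.update_of_ne hjm]
          exact hyb.1 j (fun hjT' => hj (Finset.mem_of_mem_erase hjT'))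
        · intro x hx
          simp only
          rw [Function.update_idem, Function.update_eq_self]
        · rintro ⟨y, b⟩ hyb
          rw [Finset.mem_product] at hyb
          simp only [Finset.mem_filter, Finset.mem_univ, true_and] at hyb
          simp only [Function.update_idem, Function.update_self]
          have hym : y m = x₀ m := hyb.1 m (Finset.notMem_erase m T)
          rw [← hym, Function.update_eq_self]
        · intro x hx
          simp only
          have hx' : Function.update (Function.update x m (x₀ m)) m (x m) = x := by
            rw [Function.update_idem, Function.update_eq_self]
          rw [hx']
          rw [← Finset.mul_prod_erase T _ hmT]
          congr 1
          refine Finset.prod_congr rfl fun m' hm' => ?_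
          have hm'm : m' ≠ m := (Finset.mem_erase.mp hm').1
          have hxm' : Function.update x m (x₀ m) m' = x m' := Function.update_of_ne hm'm _ _
          rw [hxm']
          refine hloc m' _ _ _ fun j hj => ?_
          have hjm : j ≠ m := by
            rintro rfl
            exact hsink m' (Finset.mem_of_mem_erase hm') hj
          rw [Function.update_of_ne hjm]
      rw [hreindex, Finset.sum_product]
      have hinner : ∀ y ∈ Finset.univ.filter
          (fun y : Fin d → Bool => ∀ j, j ∉ T.erase m → y j = x₀ j),
          ∑ b : Bool, f m b (Function.update y m b) * ∏ m' ∈ T.erase m, f m' (y m') y =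
          ∏ m' ∈ T.erase m, f m' (y m') y := by
        intro y hy
        have : ∀ b : Bool, f m b (Function.update y m b) = f m b y := by
          intro b
          refine hloc m b _ _ fun j hj => ?_
          have hjm : j ≠ m := fun h => hmm (h ▸ hj)
          rw [Function.update_of_ne hjm]
        rw [Finset.sum_congr rfl fun b _ => by rw [this b]]
        rw [← Finset.sum_mul, hf1, one_mul]
      rw [Finset.sum_congr rfl hinner]
      exact ih (T.erase m) (Finset.erase_ssubset hmT) x₀

end MargSec

section MarkovSec
variable {d : ℕ} {E : Fin d → Fin d → Prop} {f : Fin d → Bool → (Fin d → Bool) → ℝ}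

lemma markov (hacyc : ∀ a, ¬ Relation.TransGen E a a)
    (hf1 : ∀ k x, ∑ b, f k b x = 1)
    (hloc : ∀ k b x y, (∀ j, E j k → x j = y j) → f k b x = f k b y)
    {p : (Fin d → Bool) → ℝ} (hpeq : ∀ x, p x = ∏ m, f m (x m) x)
    (k : Fin d) (a : Bool) (B : (Fin d → Bool) → Prop)
    (hB : ∀ x y, (∀ m, ¬ Relation.ReflTransGen E k m → x m = y m) → (B x ↔ B y))
    (hpa : ∀ x y, B x → B y → ∀ m, E m k → x m = y m)
    (x₁ : Fin d → Bool) (hx₁ : B x₁) :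
    prE p {x | x k = a ∧ B x} = f k a x₁ * prE p {x | B x} := by
  classical
  set P : Fin d → Prop := fun m => Relation.ReflTransGen E k m with hP
  set Dfin : Finset (Fin d) := Finset.univ.filter P with hDfin
  set Nfin : Finset (Fin d) := Finset.univ.filter (fun m => ¬ P m) with hNfin
  have hkD : k ∈ Dfin := by
    simp only [hDfin, Finset.mem_filter, Finset.mem_univ, true_and, hP]
    exact Relation.ReflTransGen.refl
  have hmemD : ∀ m, m ∈ Dfin ↔ P m := fun m => by simp [hDfin]
  -- extension of a nondescendant configuration
  set ext : ({m : Fin d // ¬ P m} → Bool) → (Fin d → Bool) :=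
    fun z j => if h : ¬ P j then z ⟨j, h⟩ else false with hext
  set φ : (Fin d → Bool) → ({m : Fin d // ¬ P m} → Bool) := fun x m => x m.1 with hφ
  have hparents : ∀ m, ¬ P m → ∀ j, E j m → ¬ P j := by
    intro m hm j hj hPj
    exact hm (Relation.ReflTransGen.tail hPj hj)
  have hparentsk : ∀ j, E j k → ¬ P j := by
    intro j hj hPj
    exact hacyc k (Relation.TransGen.tail' hPj hj)
  -- fiber description
  have hfiber : ∀ z, Finset.univ.filter (fun x : Fin d → Bool => φ x = z) =
      Finset.univ.filter (fun x : Fin d → Bool => ∀ j, j ∉ Dfin → x j = ext z j) := by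
    intro z
    ext x
    simp only [Finset.mem_filter, Finset.mem_univ, true_and, funext_iff, hφ]
    constructor
    · intro h j hj
      have hPj : ¬ P j := by simpa [hmemD] using hj
      rw [hext]
      simp only [hPj, dif_pos, not_false_iff]
      exact h ⟨j, hPj⟩
    · intro h m
      have hmD : m.1 ∉ Dfin := by simp [hmemD, m.2]
      rw [h m.1 hmD, hext]
      simp [m.2]
  have hsplit : ∀ F : (Fin d → Bool) → ℝ, ∑ x, F x =
      ∑ z : {m : Fin d // ¬ P m} → Bool,
        ∑ x ∈ Finset.univ.filter (fun x : Fin d → Bool => ∀ j, j ∉ Dfin → x j = ext z j),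
          F x := by
    intro F
    rw [← Finset.sum_fiberwise Finset.univ φ F]
    exact Finset.sum_congr rfl fun z _ => by rw [hfiber z]
  -- product of nondescendant kernels
  set G : ({m : Fin d // ¬ P m} → Bool) → ℝ :=
    fun z => ∏ m ∈ Nfin, f m (ext z m) (ext z) with hG
  have hp_split : ∀ z, ∀ x ∈ Finset.univ.filter
      (fun x : Fin d → Bool => ∀ j, j ∉ Dfin → x j = ext z j),
      p x = G z * ∏ m ∈ Dfin, f m (x m) x := by
    intro z x hx
    simp only [Finset.mem_filter, Finset.mem_univ, true_and] at hx
    rw [hpeq x, ← Finset.prod_filter_mul_prod_filter_not Finset.univ P (fun m => f m (x m) x)]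
    rw [← hDfin, mul_comm]
    congr 1
    rw [hG, ← hNfin]
    refine Finset.prod_congr rfl fun m hm => ?_
    have hPm : ¬ P m := by
      simp only [hNfin, Finset.mem_filter] at hm
      exact hm.2
    have hmD : m ∉ Dfin := by simp [hmemD, hPm]
    rw [hx m hmD]
    refine hloc m _ _ _ fun j hj => ?_
    have hPj : ¬ P j := hparents m hPm j hj
    have hjD : j ∉ Dfin := by simp [hmemD, hPj]
    exact hx j hjD
  have hBagree : ∀ z, ∀ x ∈ Finset.univ.filter
      (fun x : Fin d → Bool => ∀ j, j ∉ Dfin → x j = ext z j), (B x ↔ B (ext z)) := by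
    intro z x hx
    simp only [Finset.mem_filter, Finset.mem_univ, true_and] at hx
    refine hB x (ext z) fun m hm => ?_
    have hm' : ¬ P m := by simpa [hP] using hm
    have hmD : m ∉ Dfin := by simp [hmemD, hm']
    exact hx m hmD
  -- computation of P(B)
  have compute1 : prE p {x | B x} =
      ∑ z, if B (ext z) then G z else 0 := by
    rw [prE]
    simp only [Set.mem_setOf_eq]
    rw [hsplit (fun x => if B x then p x else 0)]
    refine Finset.sum_congr rfl fun z _ => ?_
    by_cases hBz : B (ext z)
    · rw [if_pos hBz]
      have : ∀ x ∈ Finset.univ.filter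
          (fun x : Fin d → Bool => ∀ j, j ∉ Dfin → x j = ext z j),
          (if B x then p x else 0) = G z * ∏ m ∈ Dfin, f m (x m) x := by
        intro x hx
        rw [if_pos ((hBagree z x hx).mpr hBz), hp_split z x hx]
      rw [Finset.sum_congr rfl this, ← Finset.mul_sum,
        marg hacyc hf1 hloc Dfin (ext z), mul_one]
    · rw [if_neg hBz]
      refine Finset.sum_eq_zero fun x hx => ?_
      rw [if_neg (fun h => hBz ((hBagree z x hx).mp h))]
  -- computation of P(X_k = a and B)
  have hfkz : ∀ z, B (ext z) → f k a (ext z) = f k a x₁ := by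
    intro z hBz
    exact hloc k a _ _ fun j hj => hpa (ext z) x₁ hBz hx₁ j hj
  have compute2 : prE p {x | x k = a ∧ B x} =
      ∑ z, if B (ext z) then G z * f k a x₁ else 0 := by
    have e0 : prE p {x | x k = a ∧ B x} = ∑ x, if x k = a ∧ B x then p x else 0 := by
      rw [prE]
      refine Finset.sum_congr rfl fun x _ => ?_
      simp only [Set.mem_setOf_eq]
    rw [e0, hsplit (fun x => if x k = a ∧ B x then p x else 0)]
    refine Finset.sum_congr rfl fun z _ => ?_
    by_cases hBz : B (ext z)
    · rw [if_pos hBz]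
      have step1 : ∀ x ∈ Finset.univ.filter
          (fun x : Fin d → Bool => ∀ j, j ∉ Dfin → x j = ext z j),
          (if x k = a ∧ B x then p x else 0) =
          (if x k = a then G z * ∏ m ∈ Dfin, f m (x m) x else 0) := by
        intro x hx
        by_cases hxa : x k = a
        · rw [if_pos ⟨hxa, (hBagree z x hx).mpr hBz⟩, if_pos hxa, hp_split z x hx]
        · rw [if_neg (fun h => hxa h.1), if_neg hxa]
      rw [Finset.sum_congr rfl step1]
      have step2 : ∑ x ∈ Finset.univ.filter
          (fun x : Fin d → Bool => ∀ j, j ∉ Dfin → x j = ext z j),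
          (if x k = a then G z * ∏ m ∈ Dfin, f m (x m) x else 0) =
          G z * ∑ x ∈ (Finset.univ.filter
            (fun x : Fin d → Bool => ∀ j, j ∉ Dfin → x j = ext z j)).filter
            (fun x => x k = a), ∏ m ∈ Dfin, f m (x m) x := by
        conv_rhs => rw [Finset.mul_sum, Finset.sum_filter]
      rw [step2]
      -- identify the doubly-filtered set
      have hseteq : (Finset.univ.filter
            (fun x : Fin d → Bool => ∀ j, j ∉ Dfin → x j = ext z j)).filter
            (fun x => x k = a) =
          Finset.univ.filter (fun x : Fin d → Bool =>
            ∀ j, j ∉ Dfin.erase k → x j = Function.update (ext z) k a j) := by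
        ext x
        simp only [Finset.mem_filter, Finset.mem_univ, true_and]
        constructor
        · rintro ⟨h1, h2⟩ j hj
          by_cases hjk : j = k
          · subst hjk; rw [Function.update_self]; exact h2
          · rw [Function.update_of_ne hjk]
            exact h1 j (fun hjD => hj (Finset.mem_erase.mpr ⟨hjk, hjD⟩))
        · intro h
          constructor
          · intro j hjD
            have hjk : j ≠ k := fun hh => hjD (hh ▸ hkD)
            have := h j (fun hje => hjD (Finset.mem_of_mem_erase hje))
            rwa [Function.update_of_ne hjk] at this
          · have := h k (Finset.notMem_erase k Dfin)
            rwa [Function.update_self] at this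
      rw [hseteq]
      have step3 : ∀ x ∈ Finset.univ.filter (fun x : Fin d → Bool =>
            ∀ j, j ∉ Dfin.erase k → x j = Function.update (ext z) k a j),
          ∏ m ∈ Dfin, f m (x m) x =
          f k a x₁ * ∏ m ∈ Dfin.erase k, f m (x m) x := by
        intro x hx
        simp only [Finset.mem_filter, Finset.mem_univ, true_and] at hx
        have hxk : x k = a := by
          have := hx k (Finset.notMem_erase k Dfin)
          rwa [Function.update_self] at this
        rw [← Finset.mul_prod_erase Dfin _ hkD, hxk]
        congr 1
        have h1 : f k a x = f k a (ext z) := by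
          refine hloc k a _ _ fun j hj => ?_
          have hPj : ¬ P j := hparentsk j hj
          have hjD : j ∉ Dfin := by simp [hmemD, hPj]
          have hjk : j ≠ k := by
            intro hh
            exact (hh ▸ hjD) hkD
          have := hx j (fun hje => hjD (Finset.mem_of_mem_erase hje))
          rw [Function.update_of_ne hjk] at this
          rw [this]
        rw [h1, hfkz z hBz]
      rw [Finset.sum_congr rfl step3, ← Finset.mul_sum,
        marg hacyc hf1 hloc (Dfin.erase k) (Function.update (ext z) k a), mul_one]
    · rw [if_neg hBz]
      refine Finset.sum_eq_zero fun x hx => ?_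
      rw [if_neg (fun h => hBz ((hBagree z x hx).mp h.2))]
  rw [compute1, compute2, Finset.mul_sum]
  refine Finset.sum_congr rfl fun z _ => ?_
  by_cases hBz : B (ext z)
  · rw [if_pos hBz, if_pos hBz]; ring
  · rw [if_neg hBz, if_neg hBz, mul_zero]

end MarkovSec

lemma condEnt_congr_right {Ω α β β' : Type*} [Fintype Ω] [Fintype α] [Fintype β] [Fintype β']
    {p : Ω → ℝ} (X : Ω → α) {Y : Ω → β} {Y' : Ω → β'}
    (h : ∀ ω ω', Y ω = Y ω' ↔ Y' ω = Y' ω') : condEnt p X Y = condEnt p X Y' := by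
  unfold condEnt
  rw [entH_congr h, entH_congr (X := fun ω => (X ω, Y ω)) (Y := fun ω => (X ω, Y' ω))
    (fun ω ω' => by rw [Prod.ext_iff, Prod.ext_iff]; exact and_congr Iff.rfl (h ω ω'))]

section CIM
variable {d : ℕ} {E : Fin d → Fin d → Prop} {f : Fin d → Bool → (Fin d → Bool) → ℝ}
  {p : (Fin d → Bool) → ℝ}

lemma prE_of_not_exists {s : Set (Fin d → Bool)} (h : ∀ x, x ∉ s) : prE p s = 0 :=
  Finset.sum_eq_zero fun x _ => if_neg (h x)

lemma condIndep_markov (hacyc : ∀ a, ¬ Relation.TransGen E a a)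
    (hf1 : ∀ k x, ∑ b, f k b x = 1)
    (hloc : ∀ k b x y, (∀ j, E j k → x j = y j) → f k b x = f k b y)
    (hpeq : ∀ x, p x = ∏ m, f m (x m) x)
    (k : Fin d) {β : Type*} (Y : (Fin d → Bool) → β)
    (hY : ∀ x y, (∀ m, ¬ Relation.ReflTransGen E k m → x m = y m) → Y x = Y y) :
    CondIndepRV p (fun x => x k) Y (restr (β := Bool) (paF E k)) := by
  intro a b c
  show prE p {x | x k = a ∧ Y x = b ∧ restr (β := Bool) (paF E k) x = c} *
      prE p {x | restr (β := Bool) (paF E k) x = c} =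
    prE p {x | x k = a ∧ restr (β := Bool) (paF E k) x = c} *
      prE p {x | Y x = b ∧ restr (β := Bool) (paF E k) x = c}
  have hWdep : ∀ x y : Fin d → Bool, (∀ m, ¬ Relation.ReflTransGen E k m → x m = y m) →
      restr (β := Bool) (paF E k) x = restr (β := Bool) (paF E k) y := by
    intro x y h
    funext m
    have hm : E m.1 k := by
      have := m.2
      simp only [paF, Finset.mem_filter, Finset.mem_univ, true_and] at this
      exact this
    refine h m.1 fun hrt => hacyc k (Relation.TransGen.tail' hrt hm)
  by_cases hex : ∃ x₁, Y x₁ = b ∧ restr (β := Bool) (paF E k) x₁ = c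
  · obtain ⟨x₁, hYb, hWc⟩ := hex
    have hpa2 : ∀ x y : Fin d → Bool, restr (β := Bool) (paF E k) x = c →
        restr (β := Bool) (paF E k) y = c → ∀ m, E m k → x m = y m := by
      intro x y hx hy m hm
      have hmem : m ∈ paF E k := by
        simp only [paF, Finset.mem_filter, Finset.mem_univ, true_and]
        exact hm
      have := congrFun (hx.trans hy.symm) ⟨m, hmem⟩
      exact this
    have h1 := markov hacyc hf1 hloc hpeq k a
      (fun x => Y x = b ∧ restr (β := Bool) (paF E k) x = c)
      (fun x y h => by rw [hY x y h, hWdep x y h])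
      (fun x y hx hy => hpa2 x y hx.2 hy.2) x₁ ⟨hYb, hWc⟩
    have h2 := markov hacyc hf1 hloc hpeq k a
      (fun x => restr (β := Bool) (paF E k) x = c)
      (fun x y h => by rw [hWdep x y h])
      (fun x y hx hy => hpa2 x y hx hy) x₁ hWc
    rw [h1, h2]
    ring
  · push_neg at hex
    have e1 : prE p {x | x k = a ∧ Y x = b ∧ restr (β := Bool) (paF E k) x = c} = 0 :=
      prE_of_not_exists fun x hx => hex x hx.2.1 hx.2.2
    have e2 : prE p {x | Y x = b ∧ restr (β := Bool) (paF E k) x = c} = 0 :=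
      prE_of_not_exists fun x hx => hex x hx.1 hx.2
    rw [e1, e2, zero_mul, mul_zero]

end CIM

lemma mem_Aset_succ {d : ℕ} {E : Fin d → Fin d → Prop} {j : ℕ} {m : Fin d} :
    m ∈ Aset E (j + 1) ↔ ∀ q, E q m → q ∈ Aset E j := by
  rw [Aset]
  simp

lemma Aset_mono {d : ℕ} (E : Fin d → Fin d → Prop) : ∀ j, Aset E j ⊆ Aset E (j + 1) := by
  intro j
  induction j with
  | zero => simp [Aset]
  | succ j ih =>
    intro m hm
    rw [mem_Aset_succ] at hm ⊢
    exact fun q hq => ih (hm q hq)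

lemma Aset_pred {d : ℕ} (E : Fin d → Fin d → Prop) (j : ℕ) :
    ∀ m ∈ Aset E j, ∀ q, E q m → q ∈ Aset E j := by
  intro m hm q hq
  cases j with
  | zero => simp [Aset] at hm
  | succ j =>
    rw [mem_Aset_succ] at hm
    exact Aset_mono E j (hm q hq)

lemma Aset_nondesc {d : ℕ} (E : Fin d → Fin d → Prop) (j : ℕ) {k m : Fin d}
    (hm : m ∈ Aset E j) (h : Relation.ReflTransGen E k m) : k ∈ Aset E j := by
  induction h using Relation.ReflTransGen.head_induction_on with
  | refl => exact hm
  | head hab _ ih => exact Aset_pred E j _ ih _ hab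

/-- Suppose the distribution factorizes over a DAG `E` whose layer
decomposition has ancestral sets `Aset E j`, and H(X_k | pa(k)) = h* is constant
across all nodes. If `k ∉ A_{j+1}` and `i ∈ L_{j+1} = A_{j+1} \ A_j` is an ancestor
of `k` with I(X_k; X_i | A_j) > 0, then H(X_i | A_j) < H(X_k | A_j). -/
theorem equal_entropy_ancestor_smaller_conditional_entropy
    {d : ℕ} (p : (Fin d → Bool) → ℝ)
    (hpos : ∀ x, 0 < p x) (hsum : ∑ x, p x = 1)
    (E : Fin d → Fin d → Prop) (hacyc : ∀ a, ¬ Relation.TransGen E a a)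
    (hfact : Factorizes E p) (hstar : ℝ)
    (hconst : ∀ k : Fin d,
      condEnt p (fun x => x k) (restr (β := Bool) (paF E k)) = hstar)
    (j : ℕ) (k i : Fin d)
    (hk : k ∉ Aset E (j + 1))
    (hiL : i ∈ Aset E (j + 1) ∧ i ∉ Aset E j)
    (hanc : Relation.TransGen E i k)
    (hmi : 0 < condMI p (fun x => x k) (fun x => x i) (restr (β := Bool) (Aset E j))) :
    condEnt p (fun x => x i) (restr (β := Bool) (Aset E j)) <
      condEnt p (fun x => x k) (restr (β := Bool) (Aset E j)) := by
  classical
  obtain ⟨f, hf0, hf1, hloc, hpeq⟩ := hfact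
  -- graph facts
  have hpai : ∀ m, E m i → m ∈ Aset E j := fun m hm => (mem_Aset_succ.mp hiL.1) m hm
  have hnd_i : ∀ m ∈ Aset E j, ¬ Relation.ReflTransGen E i m :=
    fun m hm h => hiL.2 (Aset_nondesc E j hm h)
  have hnd_k : ∀ m ∈ Aset E j, ¬ Relation.ReflTransGen E k m :=
    fun m hm h => hk (Aset_mono E j (Aset_nondesc E j hm h))
  have hnd_ki : ¬ Relation.ReflTransGen E k i := by
    intro h
    rcases Relation.reflTransGen_iff_eq_or_transGen.mp h with h' | h'
    · exact hacyc k (h' ▸ hanc)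
    · exact hacyc k (Relation.TransGen.trans h' hanc)
  -- dependence facts
  have hZdep_i : ∀ x y : Fin d → Bool, (∀ m, ¬ Relation.ReflTransGen E i m → x m = y m) →
      restr (β := Bool) (Aset E j) x = restr (β := Bool) (Aset E j) y := by
    intro x y h
    funext m
    exact h m.1 (hnd_i m.1 m.2)
  have hYdep_k : ∀ x y : Fin d → Bool, (∀ m, ¬ Relation.ReflTransGen E k m → x m = y m) →
      (x i, restr (β := Bool) (Aset E j) x) = (y i, restr (β := Bool) (Aset E j) y) := by
    intro x y h
    have h1 : x i = y i := h i hnd_ki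
    have h2 : restr (β := Bool) (Aset E j) x = restr (β := Bool) (Aset E j) y := by
      funext m
      exact h m.1 (hnd_k m.1 m.2)
    rw [h1, h2]
  -- LHS = hstar
  have ci1 : CondIndepRV p (fun x => x i) (restr (β := Bool) (Aset E j))
      (restr (β := Bool) (paF E i)) :=
    condIndep_markov hacyc hf1 hloc hpeq i _ hZdep_i
  have c2 : condEnt p (fun x => x i)
      (fun x => (restr (β := Bool) (Aset E j) x, restr (β := Bool) (paF E i) x)) =
      condEnt p (fun x => x i) (restr (β := Bool) (paF E i)) := by
    have h0 := condMI_zero_of_condIndep hpos ci1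
    have h1 := condMI_eq_condEnt (p := p) (fun x => x i) (restr (β := Bool) (Aset E j))
      (restr (β := Bool) (paF E i))
    rw [h0] at h1
    linarith
  have c1 : condEnt p (fun x => x i) (restr (β := Bool) (Aset E j)) =
      condEnt p (fun x => x i)
        (fun x => (restr (β := Bool) (Aset E j) x, restr (β := Bool) (paF E i) x)) := by
    refine condEnt_congr_right _ fun x y => ?_
    constructor
    · intro hzz
      have hW : restr (β := Bool) (paF E i) x = restr (β := Bool) (paF E i) y := by
        funext m
        have hmE : E m.1 i := by
          have := m.2
          simp only [paF, Finset.mem_filter, Finset.mem_univ, true_and] at this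
          exact this
        exact congrFun hzz ⟨m.1, hpai m.1 hmE⟩
      rw [hzz, hW]
    · intro hp2
      exact congrArg Prod.fst hp2
  have lhs_eq : condEnt p (fun x => x i) (restr (β := Bool) (Aset E j)) = hstar := by
    rw [c1, c2, hconst i]
  -- RHS chain
  have ci2 : CondIndepRV p (fun x => x k)
      (fun x => (x i, restr (β := Bool) (Aset E j) x)) (restr (β := Bool) (paF E k)) :=
    condIndep_markov hacyc hf1 hloc hpeq k _ hYdep_k
  have d4 : condEnt p (fun x => x k)
      (fun x => ((x i, restr (β := Bool) (Aset E j) x), restr (β := Bool) (paF E k) x)) =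
      condEnt p (fun x => x k) (restr (β := Bool) (paF E k)) := by
    have h0 := condMI_zero_of_condIndep hpos ci2
    have h1 := condMI_eq_condEnt (p := p) (fun x => x k)
      (fun x => (x i, restr (β := Bool) (Aset E j) x)) (restr (β := Bool) (paF E k))
    rw [h0] at h1
    linarith
  have d3 : condEnt p (fun x => x k)
      (fun x => (restr (β := Bool) (paF E k) x, (x i, restr (β := Bool) (Aset E j) x))) =
      condEnt p (fun x => x k)
      (fun x => ((x i, restr (β := Bool) (Aset E j) x), restr (β := Bool) (paF E k) x)) := by
    refine condEnt_congr_right _ fun x y => ?_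
    simp only [Prod.ext_iff]
    tauto
  have d12 : condEnt p (fun x => x k)
      (fun x => (restr (β := Bool) (paF E k) x, (x i, restr (β := Bool) (Aset E j) x))) ≤
      condEnt p (fun x => x k) (fun x => (x i, restr (β := Bool) (Aset E j) x)) := by
    have h0 := condMI_nonneg hpos hsum (fun x => x k) (restr (β := Bool) (paF E k))
      (fun x => (x i, restr (β := Bool) (Aset E j) x))
    have h1 := condMI_eq_condEnt (p := p) (fun x => x k) (restr (β := Bool) (paF E k))
      (fun x => (x i, restr (β := Bool) (Aset E j) x))
    linarith
  have hmi' := condMI_eq_condEnt (p := p) (fun x => x k) (fun x => x i)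
      (restr (β := Bool) (Aset E j))
  rw [hmi'] at hmi
  have hck := hconst k
  linarith

end
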